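/- For every α ∈ Φ_K⁺ and every subset Υ ⊆ Φ_G⁺ \ Φ_K⁺ one has α ≠ Σ_{θ∈Λ} θ − Σ_{θ∈Υ} θ; that is, setting δ_n = half the sum of the elements of Φ_G⁺ \ Φ_K⁺, the vector (δ_n − Σ_{θ∈Λ} θ) + α is never of the form δ_n − Σ_{θ∈Υ} θ with Υ ⊆ Φ_G⁺ \ Φ_K⁺. -/

import Mathlib

open scoped RealInnerProductSpace

/-- The reflection in the hyperplane orthogonal to `α`. -/
noncomputable def rootReflection {V : Type*} [NormedAddCommGroup V] [InnerProductSpace ℝ V]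
    [FiniteDimensional ℝ V] (α : V) : V ≃ₗᵢ[ℝ] V :=
  Submodule.reflection ((ℝ ∙ α)ᗮ)

/-- The Weyl group: the group generated by the reflections in the roots. -/
noncomputable def weylGroup {V : Type*} [NormedAddCommGroup V] [InnerProductSpace ℝ V]
    [FiniteDimensional ℝ V] (Φ : Finset V) : Subgroup (V ≃ₗᵢ[ℝ] V) :=
  Subgroup.closure { w | ∃ α ∈ Φ, w = rootReflection α }

lemma rootReflection_apply {V : Type*} [NormedAddCommGroup V] [InnerProductSpace ℝ V]
    [FiniteDimensional ℝ V] (α β : V) :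
    rootReflection α β = β - (2 * (⟪α, β⟫ / ‖α‖ ^ 2)) • α := by
  show Submodule.reflection ((ℝ ∙ α)ᗮ) β = _
  rw [Submodule.reflection_apply, Submodule.starProjection_orthogonal_val, Submodule.starProjection_singleton]
  rw [two_smul]
  rw [two_mul, add_smul]
  abel

lemma rootReflection_invol {V : Type*} [NormedAddCommGroup V] [InnerProductSpace ℝ V]
    [FiniteDimensional ℝ V] (α β : V) :
    rootReflection α (rootReflection α β) = β :=
  Submodule.reflection_reflection _ _

theorem stmt5 {V : Type*} [NormedAddCommGroup V] [InnerProductSpace ℝ V] [FiniteDimensional ℝ V]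
    (Φ : Finset V) (hΦ0 : (0 : V) ∉ Φ)
    (hspan : Submodule.span ℝ (Φ : Set V) = ⊤)
    (hred : ∀ α ∈ Φ, ∀ t : ℝ, t • α ∈ Φ → t = 1 ∨ t = -1)
    (hrefl : ∀ α ∈ Φ, ∀ β ∈ Φ, rootReflection α β ∈ Φ)
    (ΦGp : Finset V)
    (hΦGp : ∃ f : V →ₗ[ℝ] ℝ, (∀ α ∈ Φ, f α ≠ 0) ∧ ∀ α, α ∈ ΦGp ↔ α ∈ Φ ∧ 0 < f α)
    (δG : V) (hδG : δG = (2⁻¹ : ℝ) • ∑ α ∈ ΦGp, α)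
    (ΦK : Finset V) (hΦKsub : ΦK ⊆ Φ)
    (hΦKneg : ∀ α ∈ ΦK, -α ∈ ΦK)
    (hΦKrefl : ∀ α ∈ ΦK, ∀ β ∈ ΦK, rootReflection α β ∈ ΦK)
    (ΦKp : Finset V) (hΦKp : ∀ α, α ∈ ΦKp ↔ α ∈ ΦK ∧ α ∈ ΦGp)
    (δK : V) (hδK : δK = (2⁻¹ : ℝ) • ∑ α ∈ ΦKp, α)
    (Λ : Finset V) (hΛ : ∀ θ, θ ∈ Λ ↔ θ ∈ ΦGp ∧ ⟪θ, δK⟫ < 0) :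
    ∀ α ∈ ΦKp, ∀ Υ : Finset V, (∀ θ ∈ Υ, θ ∈ ΦGp ∧ θ ∉ ΦKp) →
      α ≠ ∑ θ ∈ Λ, θ - ∑ θ ∈ Υ, θ := by
  classical
  intro α hα Υ hΥ hEq
  obtain ⟨f, hf0, hfmem⟩ := hΦGp
  have hαK : α ∈ ΦK := ((hΦKp α).1 hα).1
  have hαG : α ∈ ΦGp := ((hΦKp α).1 hα).2
  have hαΦ : α ∈ Φ := hΦKsub hαK
  have hα0 : α ≠ 0 := fun h => hΦ0 (h ▸ hαΦ)
  have hαn : (0:ℝ) < ‖α‖ ^ 2 := pow_pos (norm_pos_iff.2 hα0) 2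
  have hαα : (0:ℝ) < ⟪α, α⟫ := by rw [real_inner_self_eq_norm_sq]; exact hαn
  -- key: positivity of ⟪α, δK⟫
  have hKG : ∀ θ ∈ ΦKp, θ ∈ ΦGp := fun θ hθ => ((hΦKp θ).1 hθ).2
  have hfpos : ∀ θ ∈ ΦGp, 0 < f θ := fun θ hθ => ((hfmem θ).1 hθ).2
  -- sum over θ ∈ ΦKp of ⟪α, θ⟫
  set g : V → ℝ := fun θ => ⟪α, θ⟫ with hg
  have hsplit := Finset.sum_filter_add_sum_filter_not ΦKp (fun θ => rootReflection α θ ∈ ΦKp) g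
  set S := ΦKp.filter (fun θ => rootReflection α θ ∈ ΦKp) with hS
  set T := ΦKp.filter (fun θ => rootReflection α θ ∉ ΦKp) with hT
  have hanti : ∀ θ : V, g (rootReflection α θ) = - g θ := by
    intro θ
    simp only [hg, rootReflection_apply, inner_sub_right, real_inner_smul_right,
      real_inner_self_eq_norm_sq]
    field_simp
    ring
  have hSzero : ∑ θ ∈ S, g θ = 0 := by
    refine Finset.sum_involution (fun a _ => rootReflection α a) ?_ ?_ ?_ ?_
    · intro a _; rw [hanti]; ring
    · intro a _ ha ha'
      apply ha
      have : rootReflection α a - a = 0 := by rw [ha']; abel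
      rw [rootReflection_apply] at this
      have h2 : (2 * (⟪α, a⟫ / ‖α‖ ^ 2)) • α = 0 := by
        rw [← neg_eq_zero, ← this]; abel
      rcases smul_eq_zero.1 h2 with hc | hc
      · have h3 : ⟪α, a⟫ = 0 := by
          rcases mul_eq_zero.1 hc with h | h
          · norm_num at h
          · rcases div_eq_zero_iff.1 h with h' | h'
            · exact h'
            · exact absurd h' (ne_of_gt hαn)
        simpa [hg] using h3
      · exact absurd hc hα0
    · intro a ha
      simp only [hS, Finset.mem_filter] at ha ⊢
      exact ⟨ha.2, by rw [rootReflection_invol]; exact ha.1⟩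
    · intro a _; exact rootReflection_invol α a
  -- each element of T pairs nonnegatively with α
  have hTpos : ∀ θ ∈ T, 0 ≤ g θ := by
    intro θ hθ
    simp only [hT, Finset.mem_filter] at hθ
    obtain ⟨hθKp, hθr⟩ := hθ
    have hθK : θ ∈ ΦK := ((hΦKp θ).1 hθKp).1
    have hθG : θ ∈ ΦGp := ((hΦKp θ).1 hθKp).2
    have hrK : rootReflection α θ ∈ ΦK := hΦKrefl α hαK θ hθK
    have hrΦ : rootReflection α θ ∈ Φ := hΦKsub hrK
    have hrneg : ¬ (0 < f (rootReflection α θ)) := by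
      intro h
      exact hθr ((hΦKp _).2 ⟨hrK, (hfmem _).2 ⟨hrΦ, h⟩⟩)
    have hfr : f (rootReflection α θ) = f θ - (2 * (⟪α, θ⟫ / ‖α‖ ^ 2)) * f α := by
      rw [rootReflection_apply, map_sub, map_smul]; rfl
    have hfθ : 0 < f θ := hfpos θ hθG
    have hfα : 0 < f α := hfpos α hαG
    push_neg at hrneg
    rw [hfr] at hrneg
    have hc : 0 < 2 * (⟪α, θ⟫ / ‖α‖ ^ 2) := by nlinarith
    have : 0 < ⟪α, θ⟫ / ‖α‖ ^ 2 := by linarith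
    have := (div_pos_iff.1 this)
    rcases this with ⟨h1, _⟩ | ⟨_, h2⟩
    · exact le_of_lt h1
    · linarith
  have hαT : α ∈ T := by
    simp only [hT, Finset.mem_filter]
    refine ⟨hα, ?_⟩
    have : rootReflection α α = -α := Submodule.reflection_orthogonalComplement_singleton_eq_neg α
    rw [this]
    intro hmem
    have : 0 < f (-α) := hfpos _ (((hΦKp _).1 hmem).2)
    rw [map_neg] at this
    have := hfpos α hαG
    linarith
  have hTsum : g α ≤ ∑ θ ∈ T, g θ := Finset.single_le_sum hTpos hαT
  have hsum : (0:ℝ) < ∑ θ ∈ ΦKp, g θ := by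
    rw [← hsplit, hSzero, zero_add]
    have : g α = ⟪α, α⟫ := rfl
    linarith
  have hposαδ : 0 < ⟪α, δK⟫ := by
    rw [hδK, real_inner_smul_right, inner_sum]
    have : ∑ θ ∈ ΦKp, ⟪α, θ⟫ = ∑ θ ∈ ΦKp, g θ := rfl
    rw [this]
    linarith
  -- now pair the claimed equality with δK
  have hEqδ : ⟪α, δK⟫ = ∑ θ ∈ Λ, ⟪θ, δK⟫ - ∑ θ ∈ Υ, ⟪θ, δK⟫ := by
    rw [hEq, inner_sub_left, sum_inner, sum_inner]
  have hΛsplit : ∑ θ ∈ Λ ∩ Υ, ⟪θ, δK⟫ + ∑ θ ∈ Λ \ Υ, ⟪θ, δK⟫ = ∑ θ ∈ Λ, ⟪θ, δK⟫ :=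
    Finset.sum_inter_add_sum_sdiff Λ Υ (fun θ => ⟪θ, δK⟫)
  have hΥsplit : ∑ θ ∈ Υ ∩ Λ, ⟪θ, δK⟫ + ∑ θ ∈ Υ \ Λ, ⟪θ, δK⟫ = ∑ θ ∈ Υ, ⟪θ, δK⟫ :=
    Finset.sum_inter_add_sum_sdiff Υ Λ (fun θ => ⟪θ, δK⟫)
  have hinter : ∑ θ ∈ Λ ∩ Υ, ⟪θ, δK⟫ = ∑ θ ∈ Υ ∩ Λ, ⟪θ, δK⟫ := by
    rw [Finset.inter_comm]
  have h1 : ∑ θ ∈ Λ \ Υ, ⟪θ, δK⟫ ≤ 0 := by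
    apply Finset.sum_nonpos
    intro θ hθ
    exact le_of_lt ((hΛ θ).1 (Finset.mem_sdiff.1 hθ).1).2
  have h2 : 0 ≤ ∑ θ ∈ Υ \ Λ, ⟪θ, δK⟫ := by
    apply Finset.sum_nonneg
    intro θ hθ
    obtain ⟨hθΥ, hθΛ⟩ := Finset.mem_sdiff.1 hθ
    have hθG : θ ∈ ΦGp := (hΥ θ hθΥ).1
    by_contra hlt
    push_neg at hlt
    exact hθΛ ((hΛ θ).2 ⟨hθG, hlt⟩)
  linarith
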